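/- In the Earley algorithm, if [A → α • β] ∈ E_{i,j} then i ≤ j and α ⇒* a_{i+1}⋯a_j; consequently, if α contains at least one terminal-deriving symbol with nonempty yield then i < j. -/

import Mathlib

/-! Formalization of Earley parsing and the Nederhof–Satta variant. -/

variable {T N : Type}

/-- A context-free grammar: a start nonterminal and a set of productions. -/
structure CFG (T N : Type) where
  initial : N
  rules : Set (N × List (Symbol T N))

/-- One rewriting step of the grammar. -/
def CFG.Produces (g : CFG T N) (u v : List (Symbol T N)) : Prop :=
  ∃ A α p q, (A, α) ∈ g.rules ∧ u = p ++ [Symbol.nonterminal A] ++ q ∧ v = p ++ α ++ q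

/-- The derivation relation ⇒* (reflexive-transitive closure of rewriting). -/
def CFG.Derives (g : CFG T N) : List (Symbol T N) → List (Symbol T N) → Prop :=
  Relation.ReflTransGen g.Produces

/-- The language of the grammar: { w | S ⇒* w }. -/
def CFG.language (g : CFG T N) : Set (List T) :=
  { w | g.Derives [Symbol.nonterminal g.initial] (w.map Symbol.terminal) }

/-- `inputSlice w i j` is the substring a_{i+1}⋯a_j of `w` (0-based: w[i..j)), as symbols. -/
def inputSlice (w : List T) (i j : ℕ) : List (Symbol T N) :=
  ((w.take j).drop i).map Symbol.terminal

/-- The least Earley table: `Earley g w A α β i j` means the dotted item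
[A → α • β] is inserted in E_{i,j}. -/
inductive Earley (g : CFG T N) (w : List T) :
    N → List (Symbol T N) → List (Symbol T N) → ℕ → ℕ → Prop where
  | init {α} : (g.initial, α) ∈ g.rules → Earley g w g.initial [] α 0 0
  | predict {B α A β i j γ} : Earley g w B α (Symbol.nonterminal A :: β) i j →
      (A, γ) ∈ g.rules → Earley g w A [] γ j j
  | scan {A α a β i j} : Earley g w A α (Symbol.terminal a :: β) i j →
      w[j]? = some a → Earley g w A (α ++ [Symbol.terminal a]) β i (j + 1)
  | complete {A α B β i k γ j} : Earley g w A α (Symbol.nonterminal B :: β) i k →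
      Earley g w B γ [] k j → (B, γ) ∈ g.rules →
      Earley g w A (α ++ [Symbol.nonterminal B]) β i j

mutual
  /-- Forward part of the variant: `VarU g w β j` means suffix item [β] ∈ U_j. -/
  inductive VarU (g : CFG T N) (w : List T) : List (Symbol T N) → ℕ → Prop where
    | init {α} : (g.initial, α) ∈ g.rules → VarU g w α 0
    | predict {A β j γ} : VarU g w (Symbol.nonterminal A :: β) j →
        (A, γ) ∈ g.rules → VarU g w γ j
    | scan {a β j} : VarU g w (Symbol.terminal a :: β) j → w[j]? = some a →
        VarU g w β (j + 1)
    | complete {B β k γ j} : VarU g w (Symbol.nonterminal B :: β) k → (B, γ) ∈ g.rules →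
        VarT g w γ k j → VarU g w β j

  /-- Backward part of the variant: `VarT g w β j m` means suffix item [β] ∈ T_{j,m}. -/
  inductive VarT (g : CFG T N) (w : List T) : List (Symbol T N) → ℕ → ℕ → Prop where
    | empty {m} : VarU g w [] m → VarT g w [] m m
    | scan {a β j m} : VarU g w (Symbol.terminal a :: β) j → w[j]? = some a →
        VarT g w β (j + 1) m → VarT g w (Symbol.terminal a :: β) j m
    | complete {B β k γ j m} : VarU g w (Symbol.nonterminal B :: β) k → (B, γ) ∈ g.rules →
        VarT g w γ k j → VarT g w β j m → VarT g w (Symbol.nonterminal B :: β) k m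
end

lemma CFG.Produces.append_left {g : CFG T N} {u v : List (Symbol T N)}
    (h : g.Produces u v) (x : List (Symbol T N)) : g.Produces (x ++ u) (x ++ v) := by
  obtain ⟨A, α, p, q, hr, hu, hv⟩ := h
  exact ⟨A, α, x ++ p, q, hr, by simp [hu], by simp [hv]⟩

lemma CFG.Produces.append_right {g : CFG T N} {u v : List (Symbol T N)}
    (h : g.Produces u v) (x : List (Symbol T N)) : g.Produces (u ++ x) (v ++ x) := by
  obtain ⟨A, α, p, q, hr, hu, hv⟩ := h
  exact ⟨A, α, p, q ++ x, hr, by simp [hu], by simp [hv]⟩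

lemma CFG.Derives.append {g : CFG T N} {u u' v v' : List (Symbol T N)}
    (h : g.Derives u u') (h' : g.Derives v v') : g.Derives (u ++ v) (u' ++ v') := by
  have h1 : g.Derives (u ++ v) (u' ++ v) :=
    Relation.ReflTransGen.lift (r := g.Produces) (p := g.Produces) (· ++ v) (fun _ _ hp => hp.append_right v) _ _ h
  have h2 : g.Derives (u' ++ v) (u' ++ v') :=
    Relation.ReflTransGen.lift (r := g.Produces) (p := g.Produces) (u' ++ ·) (fun _ _ hp => hp.append_left u') _ _ h'
  exact h1.trans h2

lemma CFG.derives_of_rule {g : CFG T N} {A : N} {γ : List (Symbol T N)}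
    (h : (A, γ) ∈ g.rules) : g.Derives [Symbol.nonterminal A] γ :=
  Relation.ReflTransGen.single ⟨A, γ, [], [], h, by simp, by simp⟩

lemma inputSlice_append {w : List T} {i k j : ℕ} (hik : i ≤ k) (hkj : k ≤ j) :
    (inputSlice w i j : List (Symbol T N)) = inputSlice w i k ++ inputSlice w k j := by
  unfold inputSlice
  rw [← List.map_append]
  congr 1
  have h1 : w.take j = (w.take j).take k ++ (w.take j).drop k := by simp
  rw [List.take_take, min_eq_left hkj] at h1
  conv_lhs => rw [h1]
  rw [List.drop_append]
  congr 1
  rcases le_or_gt k (w.take j).length with h | h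
  · rw [List.length_take]
    have h' : k ≤ min j w.length := by simpa [List.length_take] using h
    have h0 : i - k ⊓ w.length = 0 := by
      change i - min k w.length = 0
      omega
    rw [h0, List.drop_zero]
  · have h2 : (w.take j).drop k = [] := List.drop_eq_nil_of_le (le_of_lt h)
    simp [h2]

lemma inputSlice_succ {w : List T} {i j : ℕ} {a : T} (hij : i ≤ j)
    (ha : w[j]? = some a) :
    (inputSlice w i (j + 1) : List (Symbol T N)) =
      inputSlice w i j ++ [Symbol.terminal a] := by
  unfold inputSlice
  have hj : j < w.length := (List.getElem?_eq_some_iff.mp ha).1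
  rw [List.take_succ, ha]
  show List.map _ (List.drop i (w.take j ++ [a])) = _
  rw [List.drop_append, List.length_take]
  have h0 : i - j ⊓ w.length = 0 := by omega
  rw [h0]
  simp

/-- if [A → α • β] ∈ E_{i,j} then i ≤ j and α ⇒* a_{i+1}⋯a_j;
consequently, if α contains a symbol all of whose terminal yields are nonempty,
then i < j. -/
theorem earley_item_sound (g : CFG T N) (w : List T) (A : N)
    (α β : List (Symbol T N)) (i j : ℕ) (h : Earley g w A α β i j) :
    i ≤ j ∧ g.Derives α (inputSlice w i j) ∧
      ((∃ X ∈ α, ∀ v : List T, g.Derives [X] (v.map Symbol.terminal) → v ≠ []) →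
        i < j) := by
  induction h with
  | init hr =>
    refine ⟨le_refl _, ?_, ?_⟩
    · have : (inputSlice w 0 0 : List (Symbol T N)) = [] := by
        simp [inputSlice]
      rw [this]; exact Relation.ReflTransGen.refl
    · rintro ⟨X, hX, -⟩; simp at hX
  | predict hE hr ih =>
    rename_i B' α' A' β' i' j' γ'
    refine ⟨le_refl _, ?_, ?_⟩
    · have : (inputSlice w j' j' : List (Symbol T N)) = [] := by
        simp [inputSlice, List.drop_take]
      rw [this]; exact Relation.ReflTransGen.refl
    · rintro ⟨X, hX, -⟩; simp at hX
  | scan _ ha ih =>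
    obtain ⟨hij, hd, _⟩ := ih
    refine ⟨by omega, ?_, fun _ => by omega⟩
    rw [inputSlice_succ hij ha]
    exact hd.append (Relation.ReflTransGen.refl)
  | complete hE1 hE2 hr ih1 ih2 =>
    rename_i A' α' B β' i' k γ j'
    obtain ⟨hik, hd1, h1⟩ := ih1
    obtain ⟨hkj, hd2, _⟩ := ih2
    have hBd : g.Derives [Symbol.nonterminal B] (inputSlice w k j') :=
      (CFG.derives_of_rule hr).trans hd2
    refine ⟨le_trans hik hkj, ?_, ?_⟩
    · rw [inputSlice_append hik hkj]
      exact hd1.append hBd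
    · rintro ⟨X, hX, hne⟩
      rcases List.mem_append.mp hX with hX | hX
      · exact lt_of_lt_of_le (h1 ⟨X, hX, hne⟩) hkj
      · simp at hX
        subst hX
        have hv : inputSlice w k j' =
            (((w.take j').drop k).map Symbol.terminal : List (Symbol T N)) := rfl
        rw [hv] at hBd
        have := hne _ hBd
        have hlen : ((w.take j').drop k).length ≠ 0 := by
          intro h0; exact this (List.eq_nil_of_length_eq_zero h0)
        rw [List.length_drop, List.length_take] at hlen
        omega
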